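/- In the time-frequency canonical model setting, the inverse filter coefficients satisfy â_{m,n} = (1/(WT)) a_{−m,n}, where a_{m,n} = √(W/T) ∫₀^T e^{−j2πnt/T} sinc(Wt − m) dt and â_{m,n} are the Fourier coefficients of 1/A(e^{j2πθ₁}, e^{j2πθ₂}) with A(e^{j2πθ₁},e^{j2πθ₂}) = √(WT) e^{j2πWTθ₁θ₂} for θ₁ ∈ (0,1/2) and √(WT) e^{j2πWT(θ₁−1)θ₂} for θ₁ ∈ (1/2,1). -/

import Mathlib

open MeasureTheory Complex Real

noncomputable def sinc (u : ℝ) : ℝ := if u = 0 then 1 else Real.sin (π * u) / (π * u)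

/-- The time-frequency coefficients
`a_{m,n} = √(W/T) ∫₀^T e^{−2πint/T} sinc(Wt − m) dt`. -/
noncomputable def acoef (W T : ℝ) (m n : ℤ) : ℂ :=
  ((Real.sqrt (W / T) : ℝ) : ℂ) *
    ∫ t in (0 : ℝ)..T, Complex.exp (-(2 * π * Complex.I * (n * t / T))) *
      ((_root_.sinc (W * t - m) : ℝ) : ℂ)

/-- The Z-transform `A` evaluated on the torus:
`A(e^{2πiθ₁},e^{2πiθ₂}) = √(WT) e^{2πiWTθ₁θ₂}` for `θ₁ ∈ (0,1/2)` and
`√(WT) e^{2πiWT(θ₁−1)θ₂}` for `θ₁ ∈ (1/2,1)`. -/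
noncomputable def Afun (W T : ℝ) (θ₁ θ₂ : ℝ) : ℂ :=
  if θ₁ < 1/2 then
    ((Real.sqrt (W * T) : ℝ) : ℂ) * Complex.exp (2 * π * Complex.I * (W * T * θ₁ * θ₂))
  else
    ((Real.sqrt (W * T) : ℝ) : ℂ) * Complex.exp (2 * π * Complex.I * (W * T * (θ₁ - 1) * θ₂))

lemma abs_exp_one {z : ℂ} (h : z.re = 0) : ‖Complex.exp z‖ = 1 := by
  simp [Complex.norm_exp, h]

lemma abs_Afun (W T : ℝ) (hW : 0 < W) (hT : 0 < T) (x y : ℝ) :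
    ‖Afun W T x y‖ = Real.sqrt (W*T) := by
  unfold Afun
  split <;>
  · rw [norm_mul, abs_exp_one (by simp), mul_one, Complex.norm_real, Real.norm_eq_abs,
      _root_.abs_of_nonneg (Real.sqrt_nonneg _)]

lemma meas_Afun (W T : ℝ) : Measurable (fun p : ℝ × ℝ => Afun W T p.1 p.2) := by
  unfold Afun
  apply Measurable.ite (measurableSet_lt measurable_fst measurable_const)
  · fun_prop
  · fun_prop

lemma meas_Afun1 (W T θ₂ : ℝ) : Measurable (fun x : ℝ => Afun W T x θ₂) := by
  unfold Afun
  apply Measurable.ite (measurableSet_Iio)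
  · fun_prop
  · fun_prop

lemma ae_ne_half : ∀ᵐ x : ℝ, x ≠ 1/2 := by
  refine ae_iff.2 ?_
  simpa using Real.volume_singleton (a := (1/2 : ℝ))

lemma II1 (W T : ℝ) (hW : 0 < W) (hT : 0 < T) (m : ℤ) (θ₂ a b : ℝ) :
    IntervalIntegrable
      (fun θ₁ : ℝ => Complex.exp (-(2 * π * Complex.I * θ₁ * m)) / Afun W T θ₁ θ₂)
      volume a b := by
  have hc : 0 < W * T := mul_pos hW hT
  rw [intervalIntegrable_iff]
  apply Integrable.mono' (g := fun _ => (Real.sqrt (W*T))⁻¹)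
  · exact integrableOn_const measure_Ioc_lt_top.ne
  · exact (((Complex.measurable_exp.comp (by fun_prop)).div
      (meas_Afun1 W T θ₂))).aestronglyMeasurable
  · filter_upwards with x
    rw [norm_div, abs_exp_one (by simp), abs_Afun W T hW hT]
    simp

lemma sinc_integral (s : ℝ) :
    (∫ u in (-(1/2):ℝ)..(1/2), Complex.exp (-(2 * π * Complex.I * s) * u)) = ((_root_.sinc s : ℝ) : ℂ) := by
  rcases eq_or_ne s 0 with hs | hs
  · simp [hs, _root_.sinc]; norm_num
  · have hK : -(2 * (π:ℂ) * Complex.I * s) ≠ 0 := by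
      simp only [neg_ne_zero]
      exact mul_ne_zero (mul_ne_zero (mul_ne_zero two_ne_zero
        (Complex.ofReal_ne_zero.2 Real.pi_ne_zero)) Complex.I_ne_zero)
        (Complex.ofReal_ne_zero.2 hs)
    rw [integral_exp_mul_complex hK]
    have hz : ((π : ℂ) * s) ≠ 0 :=
      mul_ne_zero (Complex.ofReal_ne_zero.2 Real.pi_ne_zero) (Complex.ofReal_ne_zero.2 hs)
    rw [_root_.sinc, if_neg hs]
    push_cast [Complex.ofReal_sin]
    rw [Complex.sin]
    have e1 : -(2 * (π:ℂ) * Complex.I * s) * (1/2) = -((π:ℂ)*s*Complex.I) := by ring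
    have e2 : -(2 * (π:ℂ) * Complex.I * s) * (-(1/2)) = ((π:ℂ)*s) * Complex.I := by ring
    have e3 : -((π:ℂ)*(s:ℂ)) * Complex.I = -((π:ℂ)*s*Complex.I) := by ring
    rw [e1, e2, e3]
    have hI := Complex.I_sq
    field_simp
    rw [hI]
    ring

lemma inner_lemma (W T : ℝ) (hW : 0 < W) (hT : 0 < T) (m : ℤ) (θ₂ : ℝ) :
    (∫ θ₁ in (0:ℝ)..1, Complex.exp (-(2 * π * Complex.I * θ₁ * m)) / Afun W T θ₁ θ₂)
      = ((Real.sqrt (W*T) : ℝ) : ℂ)⁻¹ * ((_root_.sinc ((m:ℝ) + W*T*θ₂) : ℝ) : ℂ) := by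
  have hc : 0 < W * T := mul_pos hW hT
  set s : ℝ := (m:ℝ) + W*T*θ₂ with hs
  set K : ℂ := -(2 * (π:ℂ) * Complex.I * (s:ℂ)) with hKdef
  set sq : ℝ := Real.sqrt (W*T) with hsqdef
  have hsq0 : 0 < sq := Real.sqrt_pos.2 hc
  have hsqC : (sq:ℂ) ≠ 0 := Complex.ofReal_ne_zero.2 hsq0.ne'
  set d : ℂ := 2 * (π:ℂ) * Complex.I * ((W*T : ℝ) * (θ₂:ℝ) : ℝ) with hddef
  -- generic rewriting fact
  have hdiv : ∀ a b : ℂ, Complex.exp a / ((sq:ℂ) * Complex.exp b)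
      = (sq:ℂ)⁻¹ * Complex.exp (a - b) := by
    intro a b
    rw [Complex.exp_sub]
    field_simp
  -- first piece
  have h1 : (∫ θ₁ in (0:ℝ)..(1/2),
      Complex.exp (-(2 * π * Complex.I * θ₁ * m)) / Afun W T θ₁ θ₂)
      = ∫ θ₁ in (0:ℝ)..(1/2), (sq:ℂ)⁻¹ * Complex.exp (K * θ₁) := by
    apply intervalIntegral.integral_congr_ae
    filter_upwards [ae_ne_half] with x hx hmem
    rw [Set.uIoc_of_le (by norm_num : (0:ℝ) ≤ 1/2)] at hmem
    have hlt : x < 1/2 := lt_of_le_of_ne hmem.2 hx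
    simp only [Afun, if_pos hlt]
    rw [hdiv]
    congr 1
    push_cast [hKdef, hs]
    ring
  -- second piece
  have h2 : (∫ θ₁ in ((1/2):ℝ)..1,
      Complex.exp (-(2 * π * Complex.I * θ₁ * m)) / Afun W T θ₁ θ₂)
      = ∫ θ₁ in ((1/2):ℝ)..1, (sq:ℂ)⁻¹ * (Complex.exp d * Complex.exp (K * θ₁)) := by
    apply intervalIntegral.integral_congr
    intro x hmem
    rw [Set.uIcc_of_le (by norm_num : (1/2:ℝ) ≤ 1)] at hmem
    have hge : ¬ x < 1/2 := not_lt.2 hmem.1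
    simp only [Afun, if_neg hge]
    rw [hdiv, ← Complex.exp_add]
    congr 1
    push_cast [hKdef, hs, hddef]
    ring
  have hcont : ∀ a b : ℝ, IntervalIntegrable (fun x : ℝ => Complex.exp (K * x)) volume a b :=
    fun a b => (Complex.continuous_exp.comp (by fun_prop)).intervalIntegrable a b
  have hsplit : (∫ θ₁ in (0:ℝ)..1,
      Complex.exp (-(2 * π * Complex.I * θ₁ * m)) / Afun W T θ₁ θ₂)
      = (∫ θ₁ in (0:ℝ)..(1/2), Complex.exp (-(2 * π * Complex.I * θ₁ * m)) / Afun W T θ₁ θ₂)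
      + ∫ θ₁ in ((1/2):ℝ)..1, Complex.exp (-(2 * π * Complex.I * θ₁ * m)) / Afun W T θ₁ θ₂ :=
    (intervalIntegral.integral_add_adjacent_intervals
      (II1 W T hW hT m θ₂ 0 (1/2)) (II1 W T hW hT m θ₂ (1/2) 1)).symm
  rw [hsplit, h1, h2]
  simp_rw [intervalIntegral.integral_const_mul]
  rw [← mul_add]
  congr 1
  -- now: ∫_0^{1/2} exp(Kx) + exp d * ∫_{1/2}^1 exp(Kx) = sinc s
  have hshift : (∫ x in (-(1/2):ℝ)..0, Complex.exp (K * (x+1))) 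
      = ∫ x in ((1/2):ℝ)..1, Complex.exp (K * x) := by
    have := intervalIntegral.integral_comp_add_right (a := (-(1/2):ℝ)) (b := (0:ℝ))
      (fun x : ℝ => Complex.exp (K * x)) 1
    norm_num at this ⊢
    convert this using 2 <;> norm_num
  have hexpd : ∀ x : ℝ, Complex.exp d * Complex.exp (K * (x+1)) = Complex.exp (K * x) := by
    intro x
    rw [← Complex.exp_add]
    have : d + K * (x+1) = ((-m : ℤ) : ℂ) * (2 * π * Complex.I) + K * x := by
      push_cast [hKdef, hs, hddef]
      ring
    rw [this, Complex.exp_add, Complex.exp_int_mul_two_pi_mul_I, one_mul]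
  have h3 : Complex.exp d * ∫ x in ((1/2):ℝ)..1, Complex.exp (K * x)
      = ∫ x in (-(1/2):ℝ)..0, Complex.exp (K * x) := by
    rw [← hshift, ← intervalIntegral.integral_const_mul]
    simp_rw [hexpd]
  rw [h3, add_comm, intervalIntegral.integral_add_adjacent_intervals (hcont _ _) (hcont _ _)]
  rw [hKdef]
  exact sinc_integral s


/-- In the time-frequency canonical model, the inverse-filter Fourier
coefficients satisfy `â_{m,n} = (1/(WT)) a_{−m,n}`, where
`â_{m,n} = ∫₀¹∫₀¹ e^{−2πiθ₁m} e^{−2πiθ₂n} / A(e^{2πiθ₁},e^{2πiθ₂}) dθ₁ dθ₂`. -/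
theorem stmt19 (W T : ℝ) (hW : 0 < W) (hT : 0 < T) (m n : ℤ) :
    (∫ θ₁ in (0:ℝ)..1, ∫ θ₂ in (0:ℝ)..1,
      Complex.exp (-(2 * π * Complex.I * θ₁ * m)) *
        Complex.exp (-(2 * π * Complex.I * θ₂ * n)) / Afun W T θ₁ θ₂) =
    ((1 / (W * T) : ℝ) : ℂ) * acoef W T (-m) n := by
  have hc : 0 < W * T := mul_pos hW hT
  have hsq0 : 0 < Real.sqrt (W*T) := Real.sqrt_pos.2 hc
  have hsqC : ((Real.sqrt (W*T) : ℝ):ℂ) ≠ 0 := Complex.ofReal_ne_zero.2 hsq0.ne'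
  have hint : Integrable (Function.uncurry (fun θ₁ θ₂ : ℝ =>
      Complex.exp (-(2 * π * Complex.I * θ₁ * m)) *
        Complex.exp (-(2 * π * Complex.I * θ₂ * n)) / Afun W T θ₁ θ₂))
      ((volume.restrict (Set.Ioc (0:ℝ) 1)).prod (volume.restrict (Set.Ioc (0:ℝ) 1))) := by
    apply Integrable.mono' (g := fun _ => (Real.sqrt (W*T))⁻¹)
    · exact integrable_const _
    · apply Measurable.aestronglyMeasurable
      apply Measurable.div
      · fun_prop
      · exact meas_Afun W T
    · filter_upwards with p
      rw [Function.uncurry]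
      rw [norm_div, norm_mul, abs_exp_one (by simp), abs_exp_one (by simp),
        abs_Afun W T hW hT, one_mul, one_div]
  have hswap : (∫ θ₁ in (0:ℝ)..1, ∫ θ₂ in (0:ℝ)..1,
      Complex.exp (-(2 * π * Complex.I * θ₁ * m)) *
        Complex.exp (-(2 * π * Complex.I * θ₂ * n)) / Afun W T θ₁ θ₂)
      = ∫ θ₂ in (0:ℝ)..1, ∫ θ₁ in (0:ℝ)..1,
      Complex.exp (-(2 * π * Complex.I * θ₁ * m)) *
        Complex.exp (-(2 * π * Complex.I * θ₂ * n)) / Afun W T θ₁ θ₂ := by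
    rw [intervalIntegral.integral_of_le zero_le_one, intervalIntegral.integral_of_le zero_le_one]
    simp_rw [intervalIntegral.integral_of_le zero_le_one]
    exact MeasureTheory.integral_integral_swap hint
  rw [hswap]
  have hpt : ∀ θ₂ : ℝ, (∫ θ₁ in (0:ℝ)..1,
      Complex.exp (-(2 * π * Complex.I * θ₁ * m)) *
        Complex.exp (-(2 * π * Complex.I * θ₂ * n)) / Afun W T θ₁ θ₂)
      = ((Real.sqrt (W*T) : ℝ):ℂ)⁻¹ * (Complex.exp (-(2 * π * Complex.I * θ₂ * n)) *
          ((_root_.sinc ((m:ℝ) + W*T*θ₂) : ℝ) : ℂ)) := by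
    intro θ₂
    have h : (fun θ₁ : ℝ => Complex.exp (-(2 * π * Complex.I * θ₁ * m)) *
        Complex.exp (-(2 * π * Complex.I * θ₂ * n)) / Afun W T θ₁ θ₂)
        = fun θ₁ : ℝ => Complex.exp (-(2 * π * Complex.I * θ₂ * n)) *
          (Complex.exp (-(2 * π * Complex.I * θ₁ * m)) / Afun W T θ₁ θ₂) := by
      funext θ₁; ring
    rw [h, intervalIntegral.integral_const_mul, inner_lemma W T hW hT m θ₂]
    ring
  simp_rw [hpt, intervalIntegral.integral_const_mul]
  rw [acoef]
  have hchg : (∫ t in (0:ℝ)..T, Complex.exp (-(2 * π * Complex.I * ((n:ℂ) * t / T))) *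
        ((_root_.sinc (W * t - ((-m : ℤ):ℝ)) : ℝ) : ℂ))
      = (T:ℂ) * ∫ θ in (0:ℝ)..1, Complex.exp (-(2 * π * Complex.I * θ * n)) *
          ((_root_.sinc ((m:ℝ) + W*T*θ) : ℝ):ℂ) := by
    have h := intervalIntegral.smul_integral_comp_mul_left
      (fun t : ℝ => Complex.exp (-(2 * π * Complex.I * ((n:ℂ) * t / T))) *
        ((_root_.sinc (W * t - ((-m : ℤ):ℝ)) : ℝ) : ℂ)) (a := 0) (b := 1) T
    rw [mul_zero, mul_one] at h
    rw [← h, Complex.real_smul]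
    congr 1
    apply intervalIntegral.integral_congr
    intro θ _
    show Complex.exp (-(2 * π * Complex.I * ((n:ℂ) * ((T*θ:ℝ):ℂ) / T))) *
        ((_root_.sinc (W * (T*θ) - ((-m : ℤ):ℝ)) : ℝ) : ℂ)
      = Complex.exp (-(2 * π * Complex.I * θ * n)) * ((_root_.sinc ((m:ℝ) + W*T*θ) : ℝ):ℂ)
    have hTC : (T:ℂ) ≠ 0 := Complex.ofReal_ne_zero.2 hT.ne'
    have e1 : -(2 * (π:ℂ) * Complex.I * ((n:ℂ) * ((T*θ:ℝ):ℂ) / T)) = -(2 * (π:ℂ) * Complex.I * θ * n) := by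
      push_cast
      field_simp
    have e2 : W * (T*θ) - ((-m : ℤ):ℝ) = (m:ℝ) + W*T*θ := by push_cast; ring
    rw [e1, e2]
  rw [hchg]
  rw [show ((1 / (W * T) : ℝ):ℂ) * (((Real.sqrt (W / T) : ℝ):ℂ) *
      ((T:ℂ) * ∫ θ in (0:ℝ)..1, Complex.exp (-(2 * π * Complex.I * θ * n)) *
          ((_root_.sinc ((m:ℝ) + W*T*θ) : ℝ):ℂ)))
    = (((1 / (W * T) : ℝ):ℂ) * ((Real.sqrt (W / T) : ℝ):ℂ) * (T:ℂ)) *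
        ∫ θ in (0:ℝ)..1, Complex.exp (-(2 * π * Complex.I * θ * n)) *
          ((_root_.sinc ((m:ℝ) + W*T*θ) : ℝ):ℂ) from by ring]
  congr 1
  rw [← Complex.ofReal_mul, ← Complex.ofReal_mul, ← Complex.ofReal_inv]
  congr 1
  have h1 : Real.sqrt (W/T) * T = Real.sqrt (W*T) := by
    rw [show (W*T:ℝ) = W/T * T^2 from by rw [div_mul_eq_mul_div, eq_div_iff hT.ne']; ring]
    rw [Real.sqrt_mul (div_nonneg hW.le hT.le), Real.sqrt_sq hT.le]
  rw [mul_assoc, h1, one_div]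
  set r := Real.sqrt (W*T) with hr
  have h2 : r * r = W*T := Real.mul_self_sqrt hc.le
  rw [← h2]
  field_simp
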